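/- Let n ≥ 3 and let I ⊆ ℝ be an open interval. Let γ : I → (symmetric positive-definite (n−1)×(n−1) real matrices) be twice differentiable and Ω : I → (0,∞) be twice differentiable, and set g(r) := Ω(r)²·γ(r), τ(r) := (1/2)·tr(g(r)⁻¹·g′(r)), and σ(r) := the trace-free part of (1/2)·g(r)⁻¹·g′(r). Then the vacuum Raychaudhuri constraint τ′ + tr(σ²) + τ²/(n−1) = 0 holds on I if and only if Ω satisfies on I the linear second-order ODE Ω″ + (Ω/(n−1))·[ (1/2)·(tr(γ⁻¹γ′))′ + (1/4)·tr((γ⁻¹γ′)²) ] + (1/(n−1))·tr(γ⁻¹γ′)·Ω′ = 0. -/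

import Mathlib

open Matrix Set

private lemma det_differentiableAt {m : ℕ} (M : ℝ → Matrix (Fin m) (Fin m) ℝ) (r : ℝ)
    (h : ∀ i j, DifferentiableAt ℝ (fun s => M s i j) r) :
    DifferentiableAt ℝ (fun s => (M s).det) r := by
  have : (fun s => (M s).det)
      = fun s => ∑ σ : Equiv.Perm (Fin m), (Equiv.Perm.sign σ : ℝ) * ∏ i, M s (σ i) i := by
    funext s; rw [Matrix.det_apply]; simp [Units.smul_def, zsmul_eq_mul]
  rw [this]
  exact DifferentiableAt.fun_sum fun σ _ =>
    (DifferentiableAt.fun_finsetProd fun i _ => h (σ i) i).const_mul _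

private lemma inv_entry_differentiableAt {m : ℕ} (M : ℝ → Matrix (Fin m) (Fin m) ℝ) (r : ℝ)
    (h : ∀ i j, DifferentiableAt ℝ (fun s => M s i j) r)
    (hdet : (M r).det ≠ 0) (i j : Fin m) :
    DifferentiableAt ℝ (fun s => (M s)⁻¹ i j) r := by
  have hadj : ∀ i j : Fin m, DifferentiableAt ℝ (fun s => (M s).adjugate i j) r := by
    intro i j
    have : (fun s => (M s).adjugate i j)
        = fun s => ((M s).updateRow j (Pi.single i 1)).det := by
      funext s; rw [Matrix.adjugate_apply]
    rw [this]
    apply det_differentiableAt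
    intro i' j'
    rcases eq_or_ne i' j with rfl | hne
    · simp only [Matrix.updateRow_self]
      exact differentiableAt_const _
    · simp only [Matrix.updateRow_ne hne]
      exact h i' j'
  have : (fun s => (M s)⁻¹ i j) = fun s => ((M s).det)⁻¹ * (M s).adjugate i j := by
    funext s
    rw [Matrix.inv_def, Ring.inverse_eq_inv]
    simp [Matrix.smul_apply, smul_eq_mul]
  rw [this]
  exact ((det_differentiableAt M r h).inv hdet).mul (hadj i j)

/-- Rendall's reduction: in the affine gauge, the vacuum Raychaudhuri constraint for
`g = Ω²γ` is equivalent to a linear second-order ODE for the conformal factor `Ω`. -/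
theorem raychaudhuri_iff_conformal_ODE (n : ℕ) (hn : 3 ≤ n) (a b : ℝ)
    (γ γ' γ'' : ℝ → Matrix (Fin (n-1)) (Fin (n-1)) ℝ)
    (Ω Ω' Ω'' : ℝ → ℝ)
    (hγpd : ∀ r ∈ Ioo a b, (γ r).PosDef)
    (hγ' : ∀ r ∈ Ioo a b, ∀ i j, HasDerivAt (fun s => γ s i j) (γ' r i j) r)
    (hγ'' : ∀ r ∈ Ioo a b, ∀ i j, HasDerivAt (fun s => γ' s i j) (γ'' r i j) r)
    (hΩpos : ∀ r ∈ Ioo a b, 0 < Ω r)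
    (hΩ' : ∀ r ∈ Ioo a b, HasDerivAt Ω (Ω' r) r)
    (hΩ'' : ∀ r ∈ Ioo a b, HasDerivAt Ω' (Ω'' r) r)
    (g g' : ℝ → Matrix (Fin (n-1)) (Fin (n-1)) ℝ)
    (hg : ∀ r, g r = (Ω r)^2 • γ r)
    (hg' : ∀ r, g' r = (2 * Ω r * Ω' r) • γ r + (Ω r)^2 • γ' r)
    (τ : ℝ → ℝ) (hτ : ∀ r, τ r = (1/2 : ℝ) * ((g r)⁻¹ * g' r).trace)
    (σ : ℝ → Matrix (Fin (n-1)) (Fin (n-1)) ℝ)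
    (hσ : ∀ r, σ r = (1/2 : ℝ) • ((g r)⁻¹ * g' r) - (τ r / ((n:ℝ)-1)) • 1) :
    (∀ r ∈ Ioo a b, deriv τ r + (σ r * σ r).trace + (τ r)^2 / ((n:ℝ)-1) = 0)
      ↔
    (∀ r ∈ Ioo a b,
      Ω'' r + (Ω r / ((n:ℝ)-1)) *
          ((1/2 : ℝ) * deriv (fun s => ((γ s)⁻¹ * γ' s).trace) r
            + (1/4 : ℝ) * (((γ r)⁻¹ * γ' r) * ((γ r)⁻¹ * γ' r)).trace)
        + (1/((n:ℝ)-1)) * ((γ r)⁻¹ * γ' r).trace * Ω' r = 0) := by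
  have hn1 : (1:ℕ) ≤ n := by omega
  have hcpos : (0:ℝ) < (n:ℝ) - 1 := by
    have : (3:ℝ) ≤ (n:ℝ) := by exact_mod_cast hn
    linarith
  have hcard : ((Fintype.card (Fin (n-1)) : ℝ)) = (n:ℝ) - 1 := by
    rw [Fintype.card_fin]
    push_cast [Nat.cast_sub hn1]
    ring
  -- Step A : formula for g⁻¹ g'
  have hA : ∀ s ∈ Ioo a b, (g s)⁻¹ * g' s
      = (2 * Ω' s / Ω s) • (1 : Matrix (Fin (n-1)) (Fin (n-1)) ℝ) + (γ s)⁻¹ * γ' s := by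
    intro s hs
    have hw : 0 < Ω s := hΩpos s hs
    have hdet : IsUnit (γ s).det := Ne.isUnit (hγpd s hs).det_pos.ne'
    have hginv : (g s)⁻¹ = ((Ω s)^2)⁻¹ • (γ s)⁻¹ := by
      apply Matrix.inv_eq_right_inv
      rw [hg, Matrix.smul_mul, Matrix.mul_smul, Matrix.mul_nonsing_inv _ hdet, smul_smul,
        mul_inv_cancel₀ (pow_ne_zero 2 hw.ne'), one_smul]
    rw [hginv, hg', Matrix.smul_mul, Matrix.mul_add, Matrix.mul_smul, Matrix.mul_smul,
      Matrix.nonsing_inv_mul _ hdet, smul_add, smul_smul, smul_smul]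
    have e1 : ((Ω s)^2)⁻¹ * (2 * Ω s * Ω' s) = 2 * Ω' s / Ω s := by
      field_simp
    have e2 : ((Ω s)^2)⁻¹ * (Ω s)^2 = 1 := inv_mul_cancel₀ (pow_ne_zero 2 hw.ne')
    rw [e1, e2, one_smul]
  -- Step B : formula for τ
  have hτf : ∀ s ∈ Ioo a b,
      τ s = ((n:ℝ)-1) * (Ω' s / Ω s) + (1/2) * ((γ s)⁻¹ * γ' s).trace := by
    intro s hs
    rw [hτ, hA s hs, Matrix.trace_add, Matrix.trace_smul, Matrix.trace_one, smul_eq_mul, hcard]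
    ring
  -- the key pointwise identity
  have key : ∀ r ∈ Ioo a b,
      deriv τ r + (σ r * σ r).trace + (τ r)^2 / ((n:ℝ)-1)
        = (((n:ℝ)-1) / Ω r) *
          (Ω'' r + (Ω r / ((n:ℝ)-1)) *
            ((1/2 : ℝ) * deriv (fun s => ((γ s)⁻¹ * γ' s).trace) r
              + (1/4 : ℝ) * (((γ r)⁻¹ * γ' r) * ((γ r)⁻¹ * γ' r)).trace)
          + (1/((n:ℝ)-1)) * ((γ r)⁻¹ * γ' r).trace * Ω' r) := by
    intro r hr
    obtain ⟨c, hcn, hc0⟩ : ∃ c : ℝ, (n:ℝ) - 1 = c ∧ 0 < c := ⟨(n:ℝ) - 1, rfl, hcpos⟩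
    rw [hcn] at hτf hσ ⊢
    have hw : 0 < Ω r := hΩpos r hr
    have hdet : (γ r).det ≠ 0 := (hγpd r hr).det_pos.ne'
    -- differentiability of the trace function
    have hTdiff : DifferentiableAt ℝ (fun s => ((γ s)⁻¹ * γ' s).trace) r := by
      have h1 : ∀ i j, DifferentiableAt ℝ (fun s => γ s i j) r :=
        fun i j => (hγ' r hr i j).differentiableAt
      have h2 : ∀ i j, DifferentiableAt ℝ (fun s => (γ s)⁻¹ i j) r :=
        inv_entry_differentiableAt γ r h1 hdet
      have hrw : (fun s => ((γ s)⁻¹ * γ' s).trace)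
          = fun s => ∑ i, ∑ j, (γ s)⁻¹ i j * γ' s j i := by
        funext s
        simp [Matrix.trace, Matrix.mul_apply, Matrix.diag]
      rw [hrw]
      exact DifferentiableAt.fun_sum fun i _ => DifferentiableAt.fun_sum fun j _ =>
        (h2 i j).mul (hγ'' r hr j i).differentiableAt
    have hDD : HasDerivAt (fun s => ((γ s)⁻¹ * γ' s).trace)
        (deriv (fun s => ((γ s)⁻¹ * γ' s).trace) r) r := hTdiff.hasDerivAt
    -- derivative of τ
    have hF : HasDerivAt (fun s => c * (Ω' s / Ω s) + (1/2) * ((γ s)⁻¹ * γ' s).trace)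
        (c * ((Ω'' r * Ω r - Ω' r * Ω' r) / (Ω r)^2)
          + (1/2) * deriv (fun s => ((γ s)⁻¹ * γ' s).trace) r) r :=
      (((hΩ'' r hr).div (hΩ' r hr) hw.ne').const_mul c).add (hDD.const_mul (1/2))
    have hτd : HasDerivAt τ
        (c * ((Ω'' r * Ω r - Ω' r * Ω' r) / (Ω r)^2)
          + (1/2) * deriv (fun s => ((γ s)⁻¹ * γ' s).trace) r) r := by
      apply hF.congr_of_eventuallyEq
      filter_upwards [isOpen_Ioo.mem_nhds hr] with s hs
      exact hτf s hs
    -- σ at r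
    have hσr : σ r = (1/2 : ℝ) • ((γ r)⁻¹ * γ' r)
        - (((γ r)⁻¹ * γ' r).trace / (2*c)) • (1 : Matrix (Fin (n-1)) (Fin (n-1)) ℝ) := by
      rw [hσ, hA r hr, hτf r hr, smul_add, smul_smul]
      have e : (1/2 : ℝ) * (2 * Ω' r / Ω r)
          = (c * (Ω' r / Ω r) + 1/2 * ((γ r)⁻¹ * γ' r).trace) / c
            - ((γ r)⁻¹ * γ' r).trace / (2*c) := by
        field_simp
        ring
      rw [e, sub_smul]
      abel
    -- trace of σ²
    have hcard' : ((Fintype.card (Fin (n-1)) : ℝ)) = c := by rw [hcard, hcn]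
    have hσsq : (σ r * σ r).trace
        = (1/4) * (((γ r)⁻¹ * γ' r) * ((γ r)⁻¹ * γ' r)).trace
          - (((γ r)⁻¹ * γ' r).trace)^2 / (4*c) := by
      rw [hσr]
      simp only [sub_mul, mul_sub, Matrix.smul_mul, Matrix.mul_smul, Matrix.one_mul,
        Matrix.mul_one, smul_smul, smul_sub, Matrix.trace_sub, Matrix.trace_smul,
        Matrix.trace_one, smul_eq_mul, hcard']
      field_simp
      ring
    rw [hτd.deriv, hσsq, hτf r hr]
    field_simp
    ring
  constructor
  · intro H r hr
    have hk := key r hr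
    rw [H r hr] at hk
    have hne : (((n:ℝ)-1) / Ω r) ≠ 0 := div_ne_zero hcpos.ne' (hΩpos r hr).ne'
    exact ((mul_eq_zero.mp hk.symm).resolve_left hne)
  · intro H r hr
    rw [key r hr, H r hr, mul_zero]
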